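/- The cardinality of L satisfies |L| = Σ_{d∣m} (1/d)·Σ_{e∣d} μ(e)·(q^{d/e} − 1), where μ denotes the Möbius function and the outer sum ranges over the positive divisors d of m and the inner sum over the positive divisors e of d. -/

import Mathlib

open Polynomial

noncomputable section

/-- The orbit of `j : ZMod N` under multiplication by `q`. -/
def qOrbit (N q : ℕ) (j : ZMod N) : Set (ZMod N) :=
  Set.range fun k : ℕ => (q : ZMod N) ^ k * j

/-- The set `L` of orbits of `ZMod N` under multiplication by `q`. -/
def orbitSet (N q : ℕ) : Set (Set (ZMod N)) :=
  {l | ∃ j : ZMod N, l = qOrbit N q j}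

open Finset Function

section Aux

lemma card_mul_ker (N : ℕ) [NeZero N] (c : ℕ) (hc : c ∣ N) (hc0 : 0 < c) :
    #(Finset.univ.filter fun x : ZMod N => (c : ZMod N) * x = 0) = c := by
  classical
  have hN : 0 < N := Nat.pos_of_ne_zero (NeZero.ne N)
  set φ : ZMod N →+ ZMod N := AddMonoidHom.mulLeft (c : ZMod N) with hφ
  have hrange : φ.range = AddSubgroup.zmultiples (c : ZMod N) := by
    ext x
    constructor
    · rintro ⟨y, rfl⟩
      refine ⟨(y.val : ℤ), ?_⟩
      simp [φ, zsmul_eq_mul, ZMod.natCast_val, ZMod.cast_id, mul_comm]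
    · rintro ⟨n, rfl⟩
      exact ⟨(n : ZMod N), by simp [φ, zsmul_eq_mul, mul_comm]⟩
  have hcardrange : Nat.card φ.range = N / c := by
    rw [hrange, Nat.card_zmultiples, ZMod.addOrderOf_coe c (NeZero.ne N), Nat.gcd_eq_right hc]
  have h1 : Nat.card (ZMod N) = Nat.card (ZMod N ⧸ φ.ker) * Nat.card φ.ker :=
    AddSubgroup.card_eq_card_quotient_mul_card_addSubgroup φ.ker
  have h2 : Nat.card (ZMod N ⧸ φ.ker) = N / c := by
    rw [Nat.card_congr (QuotientAddGroup.quotientKerEquivRange φ).toEquiv, hcardrange]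
  have hNc : 0 < N / c := Nat.div_pos (Nat.le_of_dvd hN hc) hc0
  have h3 : Nat.card φ.ker = c := by
    have hcard : Nat.card (ZMod N) = N := by simp [Nat.card_eq_fintype_card, ZMod.card]
    have key : Nat.card (ZMod N ⧸ φ.ker) * Nat.card φ.ker = N := h1.symm.trans hcard
    rw [h2] at key
    have key2 : N / c * Nat.card φ.ker = N / c * c := by
      rw [key, Nat.div_mul_cancel hc]
    exact Nat.eq_of_mul_eq_mul_left hNc key2
  calc #(Finset.univ.filter fun x : ZMod N => (c : ZMod N) * x = 0)
      = Fintype.card {x : ZMod N // (c : ZMod N) * x = 0} := (Fintype.card_subtype _).symm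
    _ = Nat.card {x : ZMod N // (c : ZMod N) * x = 0} := Nat.card_eq_fintype_card.symm
    _ = Nat.card φ.ker := Nat.card_congr (Equiv.subtypeEquivRight fun x => by
          simp [φ, AddMonoidHom.mem_ker])
    _ = c := h3

variable {N q m : ℕ}

lemma iter_apply (N q : ℕ) (k : ℕ) (j : ZMod N) :
    (fun x : ZMod N => (q : ZMod N) * x)^[k] j = (q : ZMod N) ^ k * j := by
  rw [mul_left_iterate]

lemma isPeriodic_all (h1 : (q : ZMod N) ^ m = 1) (j : ZMod N) :
    IsPeriodicPt (fun x : ZMod N => (q : ZMod N) * x) m j := by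
  show _ = _
  rw [iter_apply, h1, one_mul]

lemma mem_periodicPts_all (hm : 0 < m) (h1 : (q : ZMod N) ^ m = 1) (j : ZMod N) :
    j ∈ periodicPts (fun x : ZMod N => (q : ZMod N) * x) :=
  ⟨m, hm, isPeriodic_all h1 j⟩

lemma tpos (hm : 0 < m) (h1 : (q : ZMod N) ^ m = 1) (j : ZMod N) :
    0 < minimalPeriod (fun x : ZMod N => (q : ZMod N) * x) j :=
  minimalPeriod_pos_of_mem_periodicPts (mem_periodicPts_all hm h1 j)

lemma tdvd (h1 : (q : ZMod N) ^ m = 1) (j : ZMod N) :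
    minimalPeriod (fun x : ZMod N => (q : ZMod N) * x) j ∣ m :=
  (isPeriodic_all h1 j).minimalPeriod_dvd

lemma pow_mul_eq_iff (j : ZMod N) (n : ℕ) :
    (q : ZMod N) ^ n * j = j ↔
      minimalPeriod (fun x : ZMod N => (q : ZMod N) * x) j ∣ n := by
  rw [← isPeriodicPt_iff_minimalPeriod_dvd]
  unfold IsPeriodicPt IsFixedPt
  rw [iter_apply]

lemma mem_qOrbit_self (N q : ℕ) (j : ZMod N) : j ∈ qOrbit N q j :=
  ⟨0, by simp⟩

lemma qOrbit_eq_of_mem (hm : 0 < m) (h1 : (q : ZMod N) ^ m = 1) {j j' : ZMod N}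
    (hj' : j' ∈ qOrbit N q j) : qOrbit N q j' = qOrbit N q j := by
  obtain ⟨k, hk'⟩ := hj'
  have hk : (q : ZMod N) ^ k * j = j' := hk'
  have hback : (q : ZMod N) ^ (k * (m - 1)) * j' = j := by
    rw [← hk, ← mul_assoc, ← pow_add]
    have heq : k * (m - 1) + k = k * m := by
      cases m with
      | zero => omega
      | succ m' => rw [Nat.add_sub_cancel]; ring
    rw [heq, pow_mul', h1, one_pow, one_mul]
  apply subset_antisymm
  · rintro x ⟨l, rfl⟩
    exact ⟨l + k, show (q : ZMod N) ^ (l + k) * j = _ by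
      rw [pow_add, mul_assoc, hk]⟩
  · rintro x ⟨l, rfl⟩
    exact ⟨l + k * (m - 1), show (q : ZMod N) ^ (l + k * (m - 1)) * j' = _ by
      rw [pow_add, mul_assoc, hback]⟩

lemma t_eq_of_mem (hm : 0 < m) (h1 : (q : ZMod N) ^ m = 1) {j j' : ZMod N}
    (hj' : j' ∈ qOrbit N q j) :
    minimalPeriod (fun x : ZMod N => (q : ZMod N) * x) j'
      = minimalPeriod (fun x : ZMod N => (q : ZMod N) * x) j := by
  obtain ⟨k, hk⟩ := hj'
  have h : j' = (fun x : ZMod N => (q : ZMod N) * x)^[k] j := by rw [iter_apply]; exact hk.symm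
  rw [h, minimalPeriod_apply_iterate (mem_periodicPts_all hm h1 j)]

lemma qOrbit_eq_coe (hm : 0 < m) (h1 : (q : ZMod N) ^ m = 1) (j : ZMod N) :
    qOrbit N q j = ↑((Finset.range (minimalPeriod (fun x : ZMod N => (q : ZMod N) * x) j)).image
      (fun k => (q : ZMod N) ^ k * j)) := by
  ext x
  simp only [Finset.coe_image, Finset.coe_range, Set.mem_image, Set.mem_Iio, qOrbit,
    Set.mem_range]
  constructor
  · rintro ⟨k, rfl⟩
    refine ⟨k % minimalPeriod (fun x : ZMod N => (q : ZMod N) * x) j,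
      Nat.mod_lt _ (tpos hm h1 j), ?_⟩
    rw [← iter_apply N q, ← iter_apply N q k, iterate_mod_minimalPeriod_eq]
  · rintro ⟨k, _, rfl⟩
    exact ⟨k, rfl⟩

lemma card_qOrbit_finset (q : ℕ) (j : ZMod N) :
    ((Finset.range (minimalPeriod (fun x : ZMod N => (q : ZMod N) * x) j)).image
      (fun k => (q : ZMod N) ^ k * j)).card
      = minimalPeriod (fun x : ZMod N => (q : ZMod N) * x) j := by
  rw [Finset.card_image_of_injOn, Finset.card_range]
  intro a ha b hb hab
  simp only [Finset.coe_range, Set.mem_Iio] at ha hb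
  have := iterate_injOn_Iio_minimalPeriod (f := fun x : ZMod N => (q : ZMod N) * x) (x := j)
  exact this ha hb (by simpa only [iter_apply] using hab)

end Aux

/-- `|L| = ∑_{d ∣ m} (1/d) ∑_{e ∣ d} μ(e) (q^{d/e} − 1)`. -/
theorem card_orbitSet_eq (q m : ℕ) (hm : 0 < m) (hqm : Nat.Coprime q m)
    (F E : Type*) [Field F] [Field E] [Fintype F] [Fintype E] [Algebra F E]
    (hF : Fintype.card F = q) (hE : Fintype.card E = q ^ m)
    (β : E) (hβ : orderOf β = q ^ m - 1) :
    (Nat.card (orbitSet (q ^ m - 1) q) : ℚ) =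
      ∑ d ∈ m.divisors, (1 / (d : ℚ)) *
        ∑ e ∈ d.divisors, (ArithmeticFunction.moebius e : ℚ) * ((q : ℚ) ^ (d / e) - 1) := by
  classical
  have hq2 : 2 ≤ q := hF ▸ Fintype.one_lt_card
  set N := q ^ m - 1 with hNdef
  have hqm1 : 1 < q ^ m := Nat.one_lt_pow hm.ne' hq2
  have hN : 0 < N := by omega
  haveI : NeZero N := ⟨hN.ne'⟩
  -- q^m = 1 in ZMod N
  have h1 : (q : ZMod N) ^ m = 1 := by
    have e1 : ((q ^ m : ℕ) : ZMod N) = ((N + 1 : ℕ) : ZMod N) := by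
      congr 1; omega
    push_cast at e1
    rw [e1, ZMod.natCast_self, zero_add]
  set t : ZMod N → ℕ := fun j => minimalPeriod (fun x : ZMod N => (q : ZMod N) * x) j with ht
  set a : ℕ → ℕ := fun d => #(Finset.univ.filter fun j : ZMod N => t j = d) with ha
  -- Step A : card = sum of 1/(orbit size)
  have stepA : (Nat.card (orbitSet N q) : ℚ) = ∑ j : ZMod N, (1 / (t j : ℚ)) := by
    have hset : orbitSet N q = ↑(Finset.univ.image (fun j : ZMod N => qOrbit N q j)) := by
      ext l
      simp only [orbitSet, Set.mem_setOf_eq, Finset.coe_image, Finset.coe_univ, Set.image_univ,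
        Set.mem_range, eq_comm]
    rw [hset, Nat.card_coe_set_eq, Set.ncard_coe_finset]
    have hones : ((Finset.univ.image (fun j : ZMod N => qOrbit N q j)).card : ℚ)
        = ∑ _l ∈ Finset.univ.image (fun j : ZMod N => qOrbit N q j), (1 : ℚ) := by simp
    rw [hones]
    rw [Finset.sum_image' (fun j : ZMod N => (1 / (t j : ℚ)))
      (f := fun _ : Set (ZMod N) => (1 : ℚ)) ?_]
    intro j _
    have hfil : (Finset.univ.filter fun j' : ZMod N => qOrbit N q j' = qOrbit N q j)
        = (Finset.range (t j)).image (fun k => (q : ZMod N) ^ k * j) := by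
      ext j'
      simp only [Finset.mem_filter, Finset.mem_univ, true_and]
      constructor
      · intro h
        have hmem : j' ∈ qOrbit N q j := h ▸ mem_qOrbit_self N q j'
        rw [qOrbit_eq_coe hm h1 j] at hmem
        exact_mod_cast hmem
      · intro h
        exact qOrbit_eq_of_mem hm h1 (by rw [qOrbit_eq_coe hm h1 j]; exact_mod_cast h)
    rw [hfil]
    have hconst : ∀ j' ∈ (Finset.range (t j)).image (fun k => (q : ZMod N) ^ k * j),
        (1 / (t j' : ℚ)) = 1 / (t j : ℚ) := by
      intro j' hj'
      have : j' ∈ qOrbit N q j := by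
        rw [qOrbit_eq_coe hm h1 j]; exact_mod_cast hj'
      simp only [ht]
      rw [t_eq_of_mem hm h1 this]
    rw [Finset.sum_congr rfl hconst, Finset.sum_const, card_qOrbit_finset, nsmul_eq_mul]
    have : (t j : ℚ) ≠ 0 := Nat.cast_ne_zero.mpr (tpos hm h1 j).ne'
    field_simp
    rfl
  -- Step B : regroup by orbit size
  have stepB : ∑ j : ZMod N, (1 / (t j : ℚ)) = ∑ d ∈ m.divisors, (a d : ℚ) * (1 / (d : ℚ)) := by
    rw [← Finset.sum_fiberwise_of_maps_to
      (g := t) (t := m.divisors) (fun j _ => Nat.mem_divisors.mpr ⟨tdvd h1 j, hm.ne'⟩)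
      (fun j => 1 / (t j : ℚ))]
    refine Finset.sum_congr rfl fun d hd => ?_
    have : ∀ j ∈ Finset.univ.filter fun j : ZMod N => t j = d,
        (1 / (t j : ℚ)) = 1 / (d : ℚ) := by
      intro j hj
      rw [(Finset.mem_filter.mp hj).2]
    rw [Finset.sum_congr rfl this, Finset.sum_const, nsmul_eq_mul, ha]
  -- Step C : ∑_{i ∣ n} a i = q^n - 1 for n ∣ m
  have stepC : ∀ n > 0, n ∈ {n | n ∣ m} → ∑ i ∈ n.divisors, (a i : ℚ) = (q : ℚ) ^ n - 1 := by
    intro n hn hnm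
    have hnm : n ∣ m := hnm
    set c : ℕ := q ^ n - 1 with hc
    have hqn1 : 1 < q ^ n := Nat.one_lt_pow hn.ne' hq2
    have hc0 : 0 < c := by omega
    have hcN : c ∣ N := by
      obtain ⟨k, rfl⟩ := hnm
      have := Nat.sub_dvd_pow_sub_pow (q ^ n) 1 k
      rwa [one_pow, ← pow_mul] at this
    have hcast : ((c : ℕ) : ZMod N) = (q : ZMod N) ^ n - 1 := by
      rw [hc]
      push_cast [Nat.cast_sub hqn1.le]
      ring
    -- the set {j : t j ∣ n} as a kernel
    have hker : (Finset.univ.filter fun j : ZMod N => t j ∣ n)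
        = Finset.univ.filter fun j : ZMod N => ((c : ℕ) : ZMod N) * j = 0 := by
      ext j
      simp only [Finset.mem_filter, Finset.mem_univ, true_and]
      rw [← pow_mul_eq_iff, hcast, sub_mul, one_mul, sub_eq_zero]
    have hcount : #(Finset.univ.filter fun j : ZMod N => t j ∣ n) = c := by
      rw [hker]; exact card_mul_ker N c hcN hc0
    have hsum : ∑ i ∈ n.divisors, a i = #(Finset.univ.filter fun j : ZMod N => t j ∣ n) := by
      rw [Finset.card_eq_sum_card_fiberwise
        (f := t) (t := n.divisors)
        (fun j hj => Nat.mem_divisors.mpr ⟨(Finset.mem_filter.mp hj).2, hn.ne'⟩)]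
      refine Finset.sum_congr rfl fun d hd => ?_
      simp only [ha]
      congr 1
      ext j
      simp only [Finset.mem_filter, Finset.mem_univ, true_and]
      constructor
      · intro h
        exact ⟨h ▸ (Nat.mem_divisors.mp hd).1, h⟩
      · exact fun h => h.2
    have : (∑ i ∈ n.divisors, (a i : ℚ)) = ((∑ i ∈ n.divisors, a i : ℕ) : ℚ) := by push_cast; rfl
    rw [this, hsum, hcount, hc]
    push_cast [Nat.cast_sub hqn1.le]
    ring
  -- Step D : Möbius inversion
  have stepD : ∀ n > 0, n ∈ {n | n ∣ m} →
      (∑ x ∈ n.divisorsAntidiagonal,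
        (ArithmeticFunction.moebius x.fst) • ((q : ℚ) ^ x.snd - 1)) = (a n : ℚ) :=
    (ArithmeticFunction.sum_eq_iff_sum_smul_moebius_eq_on {n | n ∣ m}
      (fun _ _ hab hb => hab.trans hb)).mp stepC
  rw [stepA, stepB]
  refine Finset.sum_congr rfl fun d hd => ?_
  obtain ⟨hdm, _⟩ := Nat.mem_divisors.mp hd
  have hd0 : 0 < d := Nat.pos_of_mem_divisors hd
  rw [mul_comm]
  congr 1
  rw [← stepD d hd0 hdm,
    Nat.sum_divisorsAntidiagonal (f := fun x y => (ArithmeticFunction.moebius x) • ((q : ℚ) ^ y - 1))]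
  refine Finset.sum_congr rfl fun e he => ?_
  rw [zsmul_eq_mul]
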